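/- Let Z be the B₃ configuration with representatives P₁=(1,0,0), P₂=(0,1,0), P₃=(0,0,1), P₄=(1,1,0), P₅=(1,−1,0), P₆=(1,0,1), P₇=(1,0,−1), P₈=(0,1,1), P₉=(0,1,−1), and for (a,b,c) ∈ ℂ³ let f_{(a,b,c)}(x,y,z) = 3a(b²−c²)·x²yz + 3b(c²−a²)·xy²z + 3c(a²−b²)·xyz² + a³·yz(y²−z²) − b³·xz(x²−z²) + c³·xy(x²−y²). Then the unexpected quartic at a general point is unique up to scalar: there exists a nonzero polynomial h ∈ ℂ[a,b,c] such that for all (a,b,c) with h(a,b,c) ≠ 0, every homogeneous polynomial F of degree 4 in ℂ[x,y,z] that vanishes at all nine points of Z and whose partial derivatives of order ≤ 2 all vanish at (a,b,c) is a scalar multiple of f_{(a,b,c)}. (This gives the 1:1 correspondence between unexpected curves admitted by Z and second osculating spaces of the B₃ surface.) -/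

import Mathlib

open MvPolynomial

/-- The nine points of the B₃ configuration in ℂ³. -/
noncomputable def B3points : Fin 9 → (Fin 3 → ℂ) :=
  ![![1, 0, 0], ![0, 1, 0], ![0, 0, 1],
    ![1, 1, 0], ![1, -1, 0], ![1, 0, 1],
    ![1, 0, -1], ![0, 1, 1], ![0, 1, -1]]

/-- The unexpected quartic of the B₃ configuration associated to (a,b,c). -/
noncomputable def unexpQuartic (a b c : ℂ) : MvPolynomial (Fin 3) ℂ :=
  C (3 * a * (b ^ 2 - c ^ 2)) * (X 0 ^ 2 * X 1 * X 2)
  + C (3 * b * (c ^ 2 - a ^ 2)) * (X 0 * X 1 ^ 2 * X 2)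
  + C (3 * c * (a ^ 2 - b ^ 2)) * (X 0 * X 1 * X 2 ^ 2)
  + C (a ^ 3) * (X 1 * X 2 * (X 1 ^ 2 - X 2 ^ 2))
  - C (b ^ 3) * (X 0 * X 2 * (X 0 ^ 2 - X 2 ^ 2))
  + C (c ^ 3) * (X 0 * X 1 * (X 0 ^ 2 - X 1 ^ 2))

/-- A polynomial has a point of multiplicity at least 3 at p if it and all its
partial derivatives of order ≤ 2 vanish at p. -/
def HasTriplePointAt (F : MvPolynomial (Fin 3) ℂ) (p : Fin 3 → ℂ) : Prop :=
  eval p F = 0 ∧ (∀ i : Fin 3, eval p (pderiv i F) = 0) ∧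
    ∀ i j : Fin 3, eval p (pderiv i (pderiv j F)) = 0

noncomputable def V (i j k : ℕ) : MvPolynomial (Fin 3) ℂ := X 0 ^ i * X 1 ^ j * X 2 ^ k
noncomputable def E (i j k : ℕ) : Fin 3 →₀ ℕ :=
  Finsupp.single 0 i + Finsupp.single 1 j + Finsupp.single 2 k

lemma eq_E (d : Fin 3 →₀ ℕ) : d = E (d 0) (d 1) (d 2) := by
  ext x
  fin_cases x <;> simp [E, Finsupp.single_apply]

lemma E_eq_iff {i j k i' j' k' : ℕ} : E i j k = E i' j' k' ↔ i = i' ∧ j = j' ∧ k = k' := by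
  constructor
  · intro h
    refine ⟨?_, ?_, ?_⟩
    · have := DFunLike.congr_fun h 0; simpa [E, Finsupp.single_apply] using this
    · have := DFunLike.congr_fun h 1; simpa [E, Finsupp.single_apply] using this
    · have := DFunLike.congr_fun h 2; simpa [E, Finsupp.single_apply] using this
  · rintro ⟨rfl, rfl, rfl⟩; rfl

lemma V_eq_monomial (i j k : ℕ) : V i j k = monomial (E i j k) 1 := by
  simp [V, E, X_pow_eq_monomial, monomial_mul]

lemma coeff_C_mul_V (a : ℂ) (i j k : ℕ) (d : Fin 3 →₀ ℕ) :
    coeff d (C a * V i j k) = if E i j k = d then a else 0 := by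
  rw [V_eq_monomial, ← monomial_zero', monomial_mul, coeff_monomial]
  simp

lemma degree_E (i j k : ℕ) : (E i j k).degree = i + j + k := by
  simp [E, Finsupp.degree_eq_weight_one, map_add, Finsupp.weight_apply, Finsupp.sum_single_index]

noncomputable abbrev cf (i j k : ℕ) (F : MvPolynomial (Fin 3) ℂ) : ℂ := coeff (E i j k) F

lemma decomp (F : MvPolynomial (Fin 3) ℂ) (hF : F.IsHomogeneous 4) :
    F = C (cf 4 0 0 F) * V 4 0 0 + C (cf 0 4 0 F) * V 0 4 0 + C (cf 0 0 4 F) * V 0 0 4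
      + C (cf 3 1 0 F) * V 3 1 0 + C (cf 1 3 0 F) * V 1 3 0 + C (cf 2 2 0 F) * V 2 2 0
      + C (cf 3 0 1 F) * V 3 0 1 + C (cf 1 0 3 F) * V 1 0 3 + C (cf 2 0 2 F) * V 2 0 2
      + C (cf 0 3 1 F) * V 0 3 1 + C (cf 0 1 3 F) * V 0 1 3 + C (cf 0 2 2 F) * V 0 2 2
      + C (cf 2 1 1 F) * V 2 1 1 + C (cf 1 2 1 F) * V 1 2 1 + C (cf 1 1 2 F) * V 1 1 2 := by
  apply MvPolynomial.ext
  intro d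
  obtain ⟨i, j, k, rfl⟩ : ∃ i j k, d = E i j k := ⟨d 0, d 1, d 2, eq_E d⟩
  simp only [coeff_add, coeff_C_mul_V, E_eq_iff, cf]
  by_cases h4 : i + j + k = 4
  · have hi : i ≤ 4 := by omega
    have hj : j ≤ 4 := by omega
    have hk : k ≤ 4 := by omega
    interval_cases i <;> interval_cases j <;> interval_cases k <;> simp_all
  · rw [hF.coeff_eq_zero (by rw [degree_E]; exact h4)]
    symm
    rw [if_neg (by omega), if_neg (by omega), if_neg (by omega), if_neg (by omega),
      if_neg (by omega), if_neg (by omega), if_neg (by omega), if_neg (by omega),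
      if_neg (by omega), if_neg (by omega), if_neg (by omega), if_neg (by omega),
      if_neg (by omega), if_neg (by omega), if_neg (by omega)]
    norm_num

lemma pderiv_two (i : Fin 3) : pderiv i (2 : MvPolynomial (Fin 3) ℂ) = 0 := by
  rw [← map_ofNat (C : ℂ →+* MvPolynomial (Fin 3) ℂ) 2]; exact pderiv_C

lemma pderiv_three (i : Fin 3) : pderiv i (3 : MvPolynomial (Fin 3) ℂ) = 0 := by
  rw [← map_ofNat (C : ℂ →+* MvPolynomial (Fin 3) ℂ) 3]; exact pderiv_C

lemma pderiv_four (i : Fin 3) : pderiv i (4 : MvPolynomial (Fin 3) ℂ) = 0 := by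
  rw [← map_ofNat (C : ℂ →+* MvPolynomial (Fin 3) ℂ) 4]; exact pderiv_C

lemma cancel {x y : ℂ} (hx : x ≠ 0) (h : x * y = 0) : y = 0 :=
  (mul_eq_zero.mp h).resolve_left hx

set_option maxHeartbeats 2000000 in
/-- The unexpected quartic at a general point is unique up to scalar: there is a
nonzero polynomial h in a, b, c such that whenever h(a,b,c) ≠ 0, every quartic
through the nine B₃ points with a triple point at (a,b,c) is a scalar multiple
of f_{(a,b,c)}.  This gives the 1:1 correspondence between unexpected curves
admitted by Z and second osculating spaces of the B₃ surface. -/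
theorem unexpected_quartic_unique :
    ∃ h : MvPolynomial (Fin 3) ℂ, h ≠ 0 ∧
      ∀ a b c : ℂ, eval ![a, b, c] h ≠ 0 →
        ∀ F : MvPolynomial (Fin 3) ℂ, F.IsHomogeneous 4 →
          (∀ i : Fin 9, eval (B3points i) F = 0) →
          HasTriplePointAt F ![a, b, c] →
          ∃ t : ℂ, F = t • unexpQuartic a b c := by
  refine ⟨X 0 * X 1 * X 2 * (X 1 ^ 2 + X 2 ^ 2 - C 3 * X 0 ^ 2), ?_, ?_⟩
  · intro h0
    have h1 : ((1:ℂ) * 1 * 1 * (1 ^ 2 + 1 ^ 2 - 3 * 1 ^ 2)) = 0 := by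
      simpa using congrArg (eval ![(1:ℂ), 1, 1]) h0
    norm_num at h1
  intro a b c hh F hF hpts htp
  have hgen : a * b * c * (b ^ 2 + c ^ 2 - 3 * a ^ 2) ≠ 0 := by
    intro h0; apply hh
    have : eval ![a, b, c] (X 0 * X 1 * X 2 * (X 1 ^ 2 + X 2 ^ 2 - C 3 * X 0 ^ 2)
        : MvPolynomial (Fin 3) ℂ) = a * b * c * (b ^ 2 + c ^ 2 - 3 * a ^ 2) := by
      simp
    rw [this, h0]
  have ha : a ≠ 0 := fun h => hgen (by rw [h]; ring)
  have hb : b ≠ 0 := fun h => hgen (by rw [h]; ring)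
  have hc : c ≠ 0 := fun h => hgen (by rw [h]; ring)
  have hk : b ^ 2 + c ^ 2 - 3 * a ^ 2 ≠ 0 := fun h => hgen (by rw [h]; ring)
  -- point conditions
  have e1 := hpts 0
  have e2 := hpts 1
  have e3 := hpts 2
  have e4 := hpts 3
  have e5 := hpts 4
  have e6 := hpts 5
  have e7 := hpts 6
  have e8 := hpts 7
  have e9 := hpts 8
  rw [decomp F hF] at e1 e2 e3 e4 e5 e6 e7 e8 e9
  rw [show B3points 0 = ![(1:ℂ), 0, 0] from rfl] at e1
  rw [show B3points 1 = ![(0:ℂ), 1, 0] from rfl] at e2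
  rw [show B3points 2 = ![(0:ℂ), 0, 1] from rfl] at e3
  rw [show B3points 3 = ![(1:ℂ), 1, 0] from rfl] at e4
  rw [show B3points 4 = ![(1:ℂ), -1, 0] from rfl] at e5
  rw [show B3points 5 = ![(1:ℂ), 0, 1] from rfl] at e6
  rw [show B3points 6 = ![(1:ℂ), 0, -1] from rfl] at e7
  rw [show B3points 7 = ![(0:ℂ), 1, 1] from rfl] at e8
  rw [show B3points 8 = ![(0:ℂ), 1, -1] from rfl] at e9
  simp [V] at e1 e2 e3 e4 e5 e6 e7 e8 e9
  set p := cf 3 1 0 F with hp_def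
  set q := cf 3 0 1 F with hq_def
  set r := cf 0 3 1 F with hr_def
  set s := cf 2 1 1 F with hs_def
  set t := cf 1 2 1 F with ht_def
  set u := cf 1 1 2 F with hu_def
  have h400 : cf 4 0 0 F = 0 := by linear_combination e1
  have h040 : cf 0 4 0 F = 0 := by linear_combination e2
  have h004 : cf 0 0 4 F = 0 := by linear_combination e3
  have h220 : cf 2 2 0 F = 0 := by linear_combination (e4 + e5) / 2 - e1 - e2
  have h130 : cf 1 3 0 F = -p := by linear_combination (e4 - e5) / 2
  have h202 : cf 2 0 2 F = 0 := by linear_combination (e6 + e7) / 2 - e1 - e3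
  have h103 : cf 1 0 3 F = -q := by linear_combination (e6 - e7) / 2
  have h022 : cf 0 2 2 F = 0 := by linear_combination (e8 + e9) / 2 - e2 - e3
  have h013 : cf 0 1 3 F = -r := by linear_combination (e8 - e9) / 2
  have hF6 : F = C p * V 3 1 0 - C p * V 1 3 0 + C q * V 3 0 1 - C q * V 1 0 3
      + C r * V 0 3 1 - C r * V 0 1 3 + C s * V 2 1 1 + C t * V 1 2 1 + C u * V 1 1 2 := by
    rw [decomp F hF, h400, h040, h004, h220, h130, h202, h103, h022, h013]
    simp only [map_zero, map_neg, ← hp_def, ← hq_def, ← hr_def, ← hs_def, ← ht_def, ← hu_def]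
    ring
  -- second derivative conditions
  have d00 := htp.2.2 0 0
  have d11 := htp.2.2 1 1
  have d22 := htp.2.2 2 2
  have d01 := htp.2.2 0 1
  have d02 := htp.2.2 0 2
  have d12 := htp.2.2 1 2
  rw [hF6] at d00 d11 d22 d01 d02 d12
  simp [V, pderiv_mul, pderiv_X_self, pderiv_X_of_ne, pderiv_two, pderiv_three, pderiv_four] at d00 d11 d22 d01 d02 d12
  have eq1 : 6*a*b*p + 6*a*c*q + 2*b*c*s = 0 := by linear_combination d00
  have eq2 : -6*a*b*p + 6*b*c*r + 2*a*c*t = 0 := by linear_combination d11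
  have eq3 : -6*a*c*q - 6*b*c*r + 2*a*b*u = 0 := by linear_combination d22
  have eq4 : 3*(a^2-b^2)*p + 2*a*c*s + 2*b*c*t + c^2*u = 0 := by linear_combination d01
  have eq5 : 3*(a^2-c^2)*q + 2*a*b*s + b^2*t + 2*b*c*u = 0 := by linear_combination d02
  have eq6 : 3*(b^2-c^2)*r + a^2*s + 2*a*b*t + 2*a*c*u = 0 := by linear_combination d12
  -- elimination
  have eq4' : a*b*c*(b^2-a^2)*p + a*c^2*(c^2-2*a^2)*q + b*c^2*(c^2-2*b^2)*r = 0 := by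
    linear_combination (a*b*c/3)*eq4 - (a^2*c/3)*eq1 - (b^2*c/3)*eq2 - (c^3/6)*eq3
  have eq5' : a*b^2*(b^2-2*a^2)*p + a*b*c*(c^2-a^2)*q + b^2*c*(2*c^2-b^2)*r = 0 := by
    linear_combination (a*b*c/3)*eq5 - (a^2*b/3)*eq1 - (b^3/6)*eq2 - (b*c^2/3)*eq3
  have hq1 : c^3*q + b^3*p = 0 := by
    have h0 : (a*b^2*c^2*(b^2+c^2-3*a^2)) * (c^3*q + b^3*p) = 0 := by
      linear_combination (b^2*c*(2*c^2-b^2))*eq4' - (b*c^2*(c^2-2*b^2))*eq5'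
    exact cancel (mul_ne_zero (mul_ne_zero (mul_ne_zero ha (pow_ne_zero 2 hb)) (pow_ne_zero 2 hc)) hk) h0
  have hr1 : a^3*p - c^3*r = 0 := by
    have h0 : (a*b^2*c^2*(b^2+c^2-3*a^2)) * (a^3*p - c^3*r) = 0 := by
      linear_combination (a*b*c*(c^2-a^2))*eq4' - (a*c^2*(c^2-2*a^2))*eq5'
    exact cancel (mul_ne_zero (mul_ne_zero (mul_ne_zero ha (pow_ne_zero 2 hb)) (pow_ne_zero 2 hc)) hk) h0
  have hs1 : c^3*s - 3*a*(b^2-c^2)*p = 0 := by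
    have h0 : (b*c) * (c^3*s - 3*a*(b^2-c^2)*p) = 0 := by
      linear_combination (c^3/2)*eq1 - (3*a*c)*hq1
    exact cancel (mul_ne_zero hb hc) h0
  have ht1 : c^3*t - 3*b*(c^2-a^2)*p = 0 := by
    have h0 : a * (c^3*t - 3*b*(c^2-a^2)*p) = 0 := by
      linear_combination (c^2/2)*eq2 + (3*b)*hr1
    exact cancel ha h0
  have hu1 : c^2*u - 3*(a^2-b^2)*p = 0 := by
    have h0 : (a*b) * (c^2*u - 3*(a^2-b^2)*p) = 0 := by
      linear_combination (c^2/2)*eq3 + (3*a)*hq1 + (-3*b)*hr1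
    exact cancel (mul_ne_zero ha hb) h0
  refine ⟨p / c ^ 3, ?_⟩
  have hc3 : (c:ℂ)^3 ≠ 0 := pow_ne_zero _ hc
  have Hp : (C p : MvPolynomial (Fin 3) ℂ) = C (p / c^3) * C (c^3) := by
    rw [← C_mul]; congr 1; exact (div_mul_cancel₀ p hc3).symm
  have Hq : (C q : MvPolynomial (Fin 3) ℂ) = -(C (p / c^3) * C (b^3)) := by
    rw [← C_mul, ← map_neg]; congr 1; field_simp; linear_combination hq1
  have Hr : (C r : MvPolynomial (Fin 3) ℂ) = C (p / c^3) * C (a^3) := by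
    rw [← C_mul]; congr 1; field_simp; linear_combination -hr1
  have Hs : (C s : MvPolynomial (Fin 3) ℂ) = C (p / c^3) * C (3*a*(b^2-c^2)) := by
    rw [← C_mul]; congr 1; field_simp; linear_combination hs1
  have Ht : (C t : MvPolynomial (Fin 3) ℂ) = C (p / c^3) * C (3*b*(c^2-a^2)) := by
    rw [← C_mul]; congr 1; field_simp; linear_combination ht1
  have Hu : (C u : MvPolynomial (Fin 3) ℂ) = C (p / c^3) * C (3*c*(a^2-b^2)) := by
    rw [← C_mul]; congr 1; field_simp; linear_combination hu1
  rw [hF6, smul_eq_C_mul, unexpQuartic]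
  simp only [V]
  linear_combination (X 0^3 * X 1 - X 0 * X 1^3 : MvPolynomial (Fin 3) ℂ) * Hp
    + (X 0^3 * X 2 - X 0 * X 2^3 : MvPolynomial (Fin 3) ℂ) * Hq
    + (X 1^3 * X 2 - X 1 * X 2^3 : MvPolynomial (Fin 3) ℂ) * Hr
    + (X 0^2 * X 1 * X 2 : MvPolynomial (Fin 3) ℂ) * Hs
    + (X 0 * X 1^2 * X 2 : MvPolynomial (Fin 3) ℂ) * Ht
    + (X 0 * X 1 * X 2^2 : MvPolynomial (Fin 3) ℂ) * Hu
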